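/- Let G be a consensus game with n players in which all players adopt the common tie-breaking rule preferring R over L. Then for every k ∈ {1,…,n} and every order of the players, every k-lookahead outcome of G under this tie-breaking rule equals (R,…,R); in particular, every such k-lookahead outcome has all players playing the same action and has minimum (namely zero) social cost. -/
import Mathlib


/-- A sequential binary-action game (used for consensus games): `w i j` is the weight of
the edge between players `i` and `j`, and `base i b` is the cost player `i` additionally
incurs when playing `b` against the already-fixed actions of earlier players.
Actions are `Bool`, with `true` standing for `R` and `false` for `L`. -/
structure CSGame (n : ℕ) where
  w : Fin n → Fin n → ℝ
  base : Fin n → Bool → ℝ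

namespace CSGame

variable {n : ℕ}

/-- Cost of player `i` in profile `A`. -/
def cost (G : CSGame n) (A : Fin n → Bool) (i : Fin n) : ℝ :=
  G.base i (A i) + ∑ j, if A i ≠ A j then G.w i j else 0

/-- The subgame induced by the first player playing `a`. -/
def subgame (G : CSGame (n + 1)) (a : Bool) : CSGame n where
  w := fun i j => G.w i.succ j.succ
  base := fun i b => G.base i.succ b + (if b ≠ a then G.w i.succ 0 else 0)

/-- `G^k`: the game on the first `min k n` players. -/
def truncate (G : CSGame n) (k : ℕ) : CSGame (min k n) where
  w := fun i j =>
    G.w (Fin.castLE (min_le_right k n) i) (Fin.castLE (min_le_right k n) j)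
  base := fun i b => G.base (Fin.castLE (min_le_right k n) i) b

/-- The game reordered so that the player in position `i` is player `σ i`. -/
def reorder (G : CSGame n) (σ : Equiv.Perm (Fin n)) : CSGame n where
  w := fun i j => G.w (σ i) (σ j)
  base := fun i b => G.base (σ i) b

/-- Subgame-perfect outcomes with respect to the order `1,…,n`, under the common
tie-breaking rule preferring `R` (i.e. `true`): playing `L` is only allowed when it is
strictly better than playing `R`. -/
def IsSPO : {n : ℕ} → CSGame n → (Fin n → Bool) → Prop
  | 0, _, _ => True
  | _ + 1, G, A =>
      ∃ f : Bool → (Fin _ → Bool),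
        (∀ a, IsSPO (G.subgame a) (f a)) ∧
        f (A 0) = Fin.tail A ∧
        (∀ a, G.cost (Fin.cons (A 0) (f (A 0))) 0 ≤ G.cost (Fin.cons a (f a)) 0) ∧
        (A 0 = false →
          G.cost (Fin.cons false (f false)) 0 < G.cost (Fin.cons true (f true)) 0)

/-- `k`-lookahead outcomes with respect to the order `1,…,n`, under the common
tie-breaking rule preferring `R`. -/
def IsKLA (k : ℕ) : {n : ℕ} → CSGame n → (Fin n → Bool) → Prop
  | 0, _, _ => True
  | n + 1, G, A =>
      (∃ (hk : 0 < min k (n + 1)) (B : Fin (min k (n + 1)) → Bool),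
          IsSPO (G.truncate k) B ∧ B ⟨0, hk⟩ = A 0) ∧
      IsKLA k (G.subgame (A 0)) (Fin.tail A)

/-- `A` is a `k`-lookahead outcome of `G` with respect to some order of the players. -/
def IsKLO (k : ℕ) (G : CSGame n) (A : Fin n → Bool) : Prop :=
  ∃ σ : Equiv.Perm (Fin n), IsKLA k (G.reorder σ) (A ∘ σ)

end CSGame

/-- The consensus game on a weighted graph `w` (symmetric, nonnegative weights; absent
edges have weight `0`): no base costs. -/
def consensusGame (n : ℕ) (w : Fin n → Fin n → ℝ) : CSGame n where
  w := w
  base := fun _ _ => 0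

namespace CSGame

/-- Auxiliary class of games: nonnegative weights, zero base cost for `true`,
nonnegative base costs. -/
def Good {n : ℕ} (G : CSGame n) : Prop :=
  (∀ i j, 0 ≤ G.w i j) ∧ (∀ i, G.base i true = 0) ∧ (∀ i b, 0 ≤ G.base i b)

lemma Good.cost_nonneg {n : ℕ} {G : CSGame n} (hG : Good G) (A : Fin n → Bool)
    (i : Fin n) : 0 ≤ G.cost A i := by
  unfold cost
  refine add_nonneg (hG.2.2 i (A i)) (Finset.sum_nonneg fun j _ => ?_)
  split <;> [exact hG.1 i j; exact le_refl 0]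

lemma Good.subgame_true {n : ℕ} {G : CSGame (n + 1)} (hG : Good G) :
    Good (G.subgame true) := by
  refine ⟨fun i j => hG.1 _ _, fun i => ?_, fun i b => ?_⟩
  · simp [subgame, hG.2.1]
  · refine add_nonneg (hG.2.2 _ _) ?_
    split <;> [exact hG.1 _ _; exact le_refl 0]

lemma Good.truncate {n : ℕ} {G : CSGame n} (hG : Good G) (k : ℕ) :
    Good (G.truncate k) :=
  ⟨fun i j => hG.1 _ _, fun i => hG.2.1 _, fun i b => hG.2.2 _ _⟩

lemma Good.reorder {n : ℕ} {G : CSGame n} (hG : Good G) (σ : Equiv.Perm (Fin n)) :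
    Good (G.reorder σ) :=
  ⟨fun i j => hG.1 _ _, fun i => hG.2.1 _, fun i b => hG.2.2 _ _⟩

lemma Good.cost_cons_true {n : ℕ} {G : CSGame (n + 1)} (hG : Good G) :
    G.cost (Fin.cons true (fun _ => true)) 0 = 0 := by
  have h : (Fin.cons true (fun _ => true) : Fin (n + 1) → Bool) = fun _ => true := by
    funext j
    exact Fin.cases rfl (fun i => rfl) j
  rw [h]
  unfold cost
  simp [hG.2.1]

lemma spo_all_true : ∀ {n : ℕ} (G : CSGame n), Good G → ∀ A, IsSPO G A →
    A = fun _ => true := by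
  intro n
  induction n with
  | zero => intro G _ A _; funext i; exact i.elim0
  | succ n ih =>
    intro G hG A hA
    obtain ⟨f, hf, hfA, hmin, htie⟩ := hA
    have hft : f true = fun _ => true := ih _ hG.subgame_true _ (hf true)
    have hcostT : G.cost (Fin.cons true (f true)) 0 = 0 := by
      rw [hft]; exact hG.cost_cons_true
    have hA0 : A 0 = true := by
      by_contra h
      have h0 : A 0 = false := by cases h' : A 0 <;> simp_all
      have hlt := htie h0
      have hge := hG.cost_nonneg (Fin.cons false (f false)) 0
      rw [hcostT] at hlt
      linarith
    funext i
    refine Fin.cases hA0 (fun j => ?_) i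
    have htail : Fin.tail A = fun _ => true := by rw [← hfA, hA0, hft]
    exact congrFun htail j

lemma kla_all_true (k : ℕ) (hk : 1 ≤ k) :
    ∀ {n : ℕ} (G : CSGame n), Good G → ∀ A, IsKLA k G A → A = fun _ => true := by
  intro n
  induction n with
  | zero => intro G _ A _; funext i; exact i.elim0
  | succ n ih =>
    intro G hG A hA
    obtain ⟨⟨hk0, B, hSPO, hB0⟩, htail⟩ := hA
    have hB : B = fun _ => true := spo_all_true _ (hG.truncate k) _ hSPO
    have hA0 : A 0 = true := by rw [← hB0, hB]
    rw [hA0] at htail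
    have := ih _ hG.subgame_true _ htail
    funext i
    refine Fin.cases hA0 (fun j => congrFun this j) i

end CSGame

/-- In a consensus game where all players adopt the common
tie-breaking rule preferring `R` (`true`), every `k`-lookahead outcome (for any
`k ∈ {1,…,n}` and any order of the players) equals `(R,…,R)`; in particular all players
play the same action and the social cost is minimal, namely zero. -/
theorem consensus_klookahead_optimal (n : ℕ) (w : Fin n → Fin n → ℝ)
    (hsym : ∀ i j, w i j = w j i) (hnonneg : ∀ i j, 0 ≤ w i j)
    (k : ℕ) (hk1 : 1 ≤ k) (hkn : k ≤ n)
    (A : Fin n → Bool) (hA : CSGame.IsKLO k (consensusGame n w) A) :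
    A = (fun _ => true) ∧
    (∑ i, CSGame.cost (consensusGame n w) A i = 0) ∧
    (∀ B : Fin n → Bool,
      ∑ i, CSGame.cost (consensusGame n w) A i ≤
        ∑ i, CSGame.cost (consensusGame n w) B i) := by
  have hGood : CSGame.Good (consensusGame n w) :=
    ⟨fun i j => hnonneg i j, fun _ => rfl, fun _ _ => le_refl 0⟩
  obtain ⟨σ, hσ⟩ := hA
  have h := CSGame.kla_all_true k hk1 _ (hGood.reorder σ) _ hσ
  have hAt : A = fun _ => true := by
    funext i
    have := congrFun h (σ.symm i)
    simpa using this
  refine ⟨hAt, ?_, ?_⟩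
  · rw [hAt]
    refine Finset.sum_eq_zero fun i _ => ?_
    unfold CSGame.cost
    simp [consensusGame]
  · intro B
    have h1 : ∑ i, CSGame.cost (consensusGame n w) A i = 0 := by
      rw [hAt]
      refine Finset.sum_eq_zero fun i _ => ?_
      unfold CSGame.cost
      simp [consensusGame]
    rw [h1]
    exact Finset.sum_nonneg fun i _ => hGood.cost_nonneg B i
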